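/- Let κ be a regular cardinal and M a κ-presented module. Then every κ-generated direct summand of M is κ-presented. -/

import Mathlib

/-- A module is `κ`-generated if it has a generating set of cardinality at most `κ`. -/
def IsGenerated (κ : Cardinal.{u}) (R : Type u) [Ring R]
    (M : Type u) [AddCommGroup M] [Module R M] : Prop :=
  ∃ S : Set M, Cardinal.mk S ≤ κ ∧ Submodule.span R S = ⊤

/-- A module is `κ`-presented if it is `κ`-generated and admits a free presentation
with `κ`-generated kernel. -/
def IsPresented (κ : Cardinal.{u}) (R : Type u) [Ring R]
    (M : Type u) [AddCommGroup M] [Module R M] : Prop :=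
  IsGenerated κ R M ∧
    ∃ (ι : Type u) (f : (ι →₀ R) →ₗ[R] M), Function.Surjective f ∧
      IsGenerated κ R (LinearMap.ker f)

open Submodule LinearMap Cardinal

variable {R : Type u} [Ring R]

/-- `IsGenerated` of a submodule in terms of a spanning set in the ambient module. -/
lemma isGenerated_iff_span {M : Type u} [AddCommGroup M] [Module R M]
    {κ : Cardinal.{u}} (P : Submodule R M) :
    IsGenerated κ R P ↔ ∃ S : Set M, Cardinal.mk S ≤ κ ∧ Submodule.span R S = P := by
  constructor
  · rintro ⟨S, hS, hspan⟩
    refine ⟨P.subtype '' S, Cardinal.mk_image_le.trans hS, ?_⟩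
    rw [Submodule.span_image, hspan, Submodule.map_top, Submodule.range_subtype]
  · rintro ⟨S, hS, hspan⟩
    have hsub : S ⊆ (P : Set M) := hspan ▸ Submodule.subset_span
    refine ⟨P.subtype ⁻¹' S, (Cardinal.mk_preimage_of_injective _ _ Subtype.val_injective).trans hS, ?_⟩
    apply Submodule.map_injective_of_injective (Submodule.injective_subtype P)
    rw [← Submodule.span_image, Set.image_preimage_eq_of_subset, hspan,
      Submodule.map_top, Submodule.range_subtype]
    simpa [Submodule.range_subtype] using hsub

lemma span_card_comap {A B : Type u} [AddCommGroup A] [Module R A] [AddCommGroup B] [Module R B]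
    {κ : Cardinal.{u}} (hκ : Cardinal.aleph0 ≤ κ) (q : A →ₗ[R] B) {Q : Submodule R B}
    (hker : ∃ K : Set A, Cardinal.mk K ≤ κ ∧ span R K = LinearMap.ker q)
    (hQ : ∃ V : Set B, Cardinal.mk V ≤ κ ∧ span R V = Q)
    (hle : Q ≤ LinearMap.range q) :
    ∃ S : Set A, Cardinal.mk S ≤ κ ∧ span R S = Submodule.comap q Q := by
  obtain ⟨K, hK, hKs⟩ := hker
  obtain ⟨V, hV, hVs⟩ := hQ
  have hch : ∀ v : V, ∃ x : A, q x = (v : B) := fun v => hle (hVs ▸ subset_span v.2)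
  choose a ha using hch
  have hmap : Submodule.map q (span R (Set.range a)) = Q := by
    rw [← Submodule.span_image]
    have : q '' Set.range a = V := by
      rw [← Set.range_comp]
      have : (q ∘ a) = fun v : V => (v : B) := funext fun v => ha v
      rw [this, Subtype.range_coe]
    rw [this, hVs]
  refine ⟨K ∪ Set.range a, ?_, ?_⟩
  · refine (Cardinal.mk_union_le _ _).trans ?_
    calc Cardinal.mk K + Cardinal.mk (Set.range a) ≤ κ + κ :=
            add_le_add hK (Cardinal.mk_range_le.trans hV)
      _ = κ := Cardinal.add_eq_self hκ
  · apply le_antisymm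
    · rw [Submodule.span_union, sup_le_iff]
      constructor
      · rw [hKs, ← Submodule.comap_bot q]
        exact Submodule.comap_mono bot_le
      · rw [← hmap]
        exact (Submodule.span_le.2 Submodule.subset_span).trans
          (fun x hx => Submodule.mem_comap.2 (Submodule.mem_map_of_mem hx))
    · intro x hx
      have hqx : q x ∈ Submodule.map q (span R (Set.range a)) := hmap ▸ hx
      obtain ⟨u, hu, hux⟩ := hqx
      have hxu : x - u ∈ span R K := by
        rw [hKs, LinearMap.mem_ker, map_sub, hux, sub_self]
      have : x = (x - u) + u := by abel
      rw [this]
      exact Submodule.add_mem _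
        (Submodule.span_mono Set.subset_union_left hxu)
        (Submodule.span_mono Set.subset_union_right hu)


/-- Every `κ`-generated direct summand of a `κ`-presented module is `κ`-presented. -/
theorem stmt4
    {R : Type u} [Ring R] {M : Type u} [AddCommGroup M] [Module R M]
    (κ : Cardinal.{u}) (hκ : κ.IsRegular)
    (hM : IsPresented κ R M)
    (N : Submodule R M) (hsum : ∃ N' : Submodule R M, IsCompl N N')
    (hgen : IsGenerated κ R N) :
    IsPresented κ R N := by
  have hκ0 : Cardinal.aleph0 ≤ κ := hκ.aleph0_le
  obtain ⟨hMgen, ι, f, hf, hker⟩ := hM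
  obtain ⟨N', hc⟩ := hsum
  obtain ⟨S, hS, hspan⟩ := hgen
  -- the projection onto N
  set π : M →ₗ[R] N := N.projectionOnto N' hc with hπ
  set f' : (ι →₀ R) →ₗ[R] N := π.comp f with hf'
  have hf'surj : Function.Surjective f' := by
    intro n
    obtain ⟨x, hx⟩ := hf (n : M)
    exact ⟨x, by simp [hf', hπ, hx, Submodule.projectionOnto_apply_left]⟩
  -- the presentation of N
  set g : (S →₀ R) →ₗ[R] N := Finsupp.linearCombination R ((↑) : S → N) with hg
  have hgsurj : Function.Surjective g := by
    rw [← LinearMap.range_eq_top, hg, Finsupp.range_linearCombination, Subtype.range_coe, hspan]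
  -- τ : (ι →₀ R) → (S →₀ R) with g ∘ τ = f'
  choose b hb using fun i : ι => hgsurj (f' (Finsupp.single i 1))
  set τ : (ι →₀ R) →ₗ[R] (S →₀ R) := Finsupp.linearCombination R b with hτ
  have hgτ : g.comp τ = f' := by
    apply Finsupp.lhom_ext'
    intro i
    apply LinearMap.ext_ring
    simp [hτ, hb]
  -- σ : (S →₀ R) → (ι →₀ R) with f' ∘ σ = g
  choose a haa using fun s : S => hf'surj (g (Finsupp.single s 1))
  set σ : (S →₀ R) →ₗ[R] (ι →₀ R) := Finsupp.linearCombination R a with hσ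
  have hf'σ : f'.comp σ = g := by
    apply Finsupp.lhom_ext'
    intro s
    apply LinearMap.ext_ring
    simp [hσ, haa]
  set r : (S →₀ R) →ₗ[R] (S →₀ R) := LinearMap.id - τ.comp σ with hr
  have hgr : ∀ x, g (r x) = 0 := by
    intro x
    have h1 : g (τ (σ x)) = f' (σ x) := LinearMap.congr_fun hgτ (σ x)
    have h2 : f' (σ x) = g x := LinearMap.congr_fun hf'σ x
    simp [hr, h1, h2]
  have hkerg : LinearMap.ker g = Submodule.map r ⊤ ⊔ Submodule.map τ (LinearMap.ker f') := by
    apply le_antisymm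
    · intro x hx
      have hσx : σ x ∈ LinearMap.ker f' := by
        rw [LinearMap.mem_ker]
        have h2 : f' (σ x) = g x := LinearMap.congr_fun hf'σ x
        rw [h2]; exact hx
      have hx' : x = r x + τ (σ x) := by simp [hr]
      rw [hx']
      exact Submodule.add_mem_sup ⟨x, trivial, rfl⟩ ⟨σ x, hσx, rfl⟩
    · rw [sup_le_iff]
      constructor
      · rintro _ ⟨x, -, rfl⟩
        exact LinearMap.mem_ker.2 (hgr x)
      · rintro _ ⟨x, hx, rfl⟩
        rw [LinearMap.mem_ker]
        have h1 : g (τ x) = f' x := LinearMap.congr_fun hgτ x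
        rw [h1]; exact hx
  -- N' is κ-generated inside M
  obtain ⟨T, hT, hTspan⟩ := hMgen
  set ρ : M →ₗ[R] M := N'.subtype.comp (N'.projectionOnto N hc.symm) with hρ
  have hN' : ∃ V : Set M, Cardinal.mk V ≤ κ ∧ span R V = N' := by
    refine ⟨ρ '' T, Cardinal.mk_image_le.trans hT, ?_⟩
    rw [Submodule.span_image, hTspan, Submodule.map_top, hρ, LinearMap.range_comp,
      Submodule.range_projectionOnto, Submodule.map_top, Submodule.range_subtype]
  -- ker f' is κ-generated inside ι →₀ R
  have hkerf'eq : LinearMap.ker f' = Submodule.comap f N' := by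
    rw [hf', LinearMap.ker_comp, hπ, Submodule.ker_projectionOnto]
  have hkerf : ∃ K : Set (ι →₀ R), Cardinal.mk K ≤ κ ∧ span R K = LinearMap.ker f :=
    (isGenerated_iff_span _).1 hker
  have hkerf' : ∃ K : Set (ι →₀ R), Cardinal.mk K ≤ κ ∧ span R K = LinearMap.ker f' := by
    rw [hkerf'eq]
    exact span_card_comap hκ0 f hkerf hN'
      (by rw [LinearMap.range_eq_top.2 hf]; exact le_top)
  -- ⊤ in S →₀ R is κ-generated
  have htopG : ∃ T0 : Set (S →₀ R), Cardinal.mk T0 ≤ κ ∧ span R T0 = ⊤ := by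
    refine ⟨(fun s : S => Finsupp.single s 1) '' Set.univ, ?_, ?_⟩
    · exact Cardinal.mk_image_le.trans (by rw [Cardinal.mk_univ]; exact hS)
    · rw [← Finsupp.supported_eq_span_single, Finsupp.supported_univ]
  -- assemble: ker g is κ-generated
  obtain ⟨K', hK', hK's⟩ := hkerf'
  obtain ⟨T0, hT0, hT0s⟩ := htopG
  have hkg : IsGenerated κ R (LinearMap.ker g) := by
    rw [isGenerated_iff_span]
    refine ⟨r '' T0 ∪ τ '' K', ?_, ?_⟩
    · refine (Cardinal.mk_union_le _ _).trans ?_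
      calc Cardinal.mk (r '' T0) + Cardinal.mk (τ '' K')
          ≤ κ + κ := add_le_add (Cardinal.mk_image_le.trans hT0)
            (Cardinal.mk_image_le.trans hK')
        _ = κ := Cardinal.add_eq_self hκ0
    · rw [Submodule.span_union, Submodule.span_image, Submodule.span_image, hT0s, hK's, hkerg]
  exact ⟨⟨S, hS, hspan⟩, S, g, hgsurj, hkg⟩
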